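/- Let 𝒯 be a ℤ/m-graded triangulated category (1 ≤ m ≤ ∞) and let R be a commutative Noetherian ring acting centrally on 𝒯. Let G be a split-generator of 𝒯. Then for any objects X, Y of 𝒯, Supp_R Hom^•(X, Y) ⊆ Supp_R Hom^•(G, G). In particular, any two split-generators G, G′ satisfy Supp_R Hom^•(G, G) = Supp_R Hom^•(G′, G′). -/

import Mathlib

open CategoryTheory Category Limits Pretriangulated DirectSum

universe v u

namespace RouquierDim

variable {C : Type u} [Category.{v} C] [Preadditive C] [HasZeroObject C]
  [HasShift C ℤ] [∀ n : ℤ, (shiftFunctor C n).Additive] [Pretriangulated C]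
  [HasBinaryBiproducts C]

/-- `Z` is a summand of `K`: there are maps `r : Z ⟶ K`, `k : K ⟶ Z` with `r ≫ k = 𝟙 Z`. -/
def IsSummand (Z K : C) : Prop := ∃ (r : Z ⟶ K) (k : K ⟶ Z), r ≫ k = 𝟙 Z

/-- The subcategory `ℐ * 𝒥`: objects `K` admitting a distinguished triangle
`K₀ ⟶ K ⟶ K₁ ⟶ K₀⟦1⟧` with `K₀ ∈ ℐ` and `K₁ ∈ 𝒥`. -/
def star (I J : Set C) : Set C :=
  {K | ∃ (K₀ K₁ : C) (f : K₀ ⟶ K) (g : K ⟶ K₁) (h : K₁ ⟶ K₀⟦(1 : ℤ)⟧),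
    Triangle.mk f g h ∈ (distTriang C) ∧ K₀ ∈ I ∧ K₁ ∈ J}

/-- Membership in `⟨ℐ⟩`, the smallest strictly full subcategory containing `ℐ` and
closed under finite direct sums, shifts, and summands. -/
inductive angleMem (I : Set C) : C → Prop
  | of {X : C} (hX : X ∈ I) : angleMem I X
  | zero {X : C} (hX : IsZero X) : angleMem I X
  | shift {X : C} (n : ℤ) (hX : angleMem I X) : angleMem I (X⟦n⟧)
  | sum {X Y : C} (hX : angleMem I X) (hY : angleMem I Y) : angleMem I (X ⊞ Y)
  | smd {X Y : C} (h : IsSummand X Y) (hY : angleMem I Y) : angleMem I X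
  | iso {X Y : C} (e : X ≅ Y) (hX : angleMem I X) : angleMem I Y

/-- `⟨ℐ⟩` as a set of objects. -/
def angle (I : Set C) : Set C := {X | angleMem I X}

/-- `⟨ℐ⟩_n` for `n ≥ 1`: `⟨ℐ⟩_1 = ⟨ℐ⟩`, `⟨ℐ⟩_{n+1} = ⟨⟨ℐ⟩_n * ⟨ℐ⟩⟩`. (Value `∅` at `n = 0`.) -/
def angleN (I : Set C) : ℕ → Set C
  | 0 => ∅
  | 1 => angle I
  | (n + 2) => angle (star (angleN I (n + 1)) (angle I))

/-- `G` is a split-generator of the triangulated category `C`: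
`C = ⟨G⟩_n` for some `n ∈ ℕ`. -/
def IsSplitGenerator (G : C) : Prop := ∃ n : ℕ, angleN {G} n = Set.univ

/-- A central action of a commutative ring `R` on the (`ℤ/m`-graded) triangulated
category `C`: a ring homomorphism `φ K : R →+* End K` for every object `K`, natural in `K`
and compatible with the shift. -/
structure CentralAction (R : Type*) [CommRing R] where
  φ : ∀ K : C, R →+* End K
  natural : ∀ {K L : C} (f : K ⟶ L) (r : R), φ K r ≫ f = f ≫ φ L r
  shift_comm : ∀ (K : C) (r : R) (n : ℤ), φ (K⟦n⟧) r = (φ K r)⟦n⟧'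

variable {R : Type*} [CommRing R]

/-- The `R`-module structure on `Hom(X, Y)` induced by a central action:
`r • f = f ≫ φ Y r` (equivalently, `φ X r ≫ f`, by naturality). -/
def CentralAction.homModule (A : CentralAction (C := C) R) (X Y : C) :
    Module R (X ⟶ Y) :=
  Module.compHom (X ⟶ Y) (A.φ Y)

/-- `Hom^•(X, Y) = ⊕_{i ∈ ℤ/m} Hom(X, Σ^i Y)` as an `R`-module, for the `ℤ/m`-graded
triangulated category `C` (`m = 0` encodes `m = ∞`, in which case `ℤ/m = ℤ`), packaged
as an object of `ModuleCat R`. -/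
noncomputable def CentralAction.HomBullet (A : CentralAction (C := C) R) (m : ℕ)
    (X Y : C) : ModuleCat R :=
  letI : ∀ i : ZMod m, Module R (X ⟶ Y⟦(ZMod.cast i : ℤ)⟧) := fun _ => A.homModule _ _
  ModuleCat.of R (⨁ i : ZMod m, (X ⟶ Y⟦(ZMod.cast i : ℤ)⟧))

lemma phi_angle (A : CentralAction (C := C) R) {I : Set C} (r : R)
    (hI : ∀ X ∈ I, A.φ X r = 0) : ∀ X, angleMem I X → A.φ X r = 0 := by
  intro X hX
  induction hX with
  | of h => exact hI _ h
  | zero h => exact h.eq_of_src _ _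
  | shift n h ih => rw [A.shift_comm, ih]; exact Functor.map_zero _ _ _
  | sum hX hY ihX ihY =>
      apply biprod.hom_ext
      · rw [A.natural biprod.fst r, ihX, comp_zero, zero_comp]
      · rw [A.natural biprod.snd r, ihY, comp_zero, zero_comp]
  | smd h hY ih =>
      obtain ⟨rr, k, hk⟩ := h
      have : A.φ _ r = rr ≫ A.φ _ r ≫ k := by
        rw [← Category.assoc, ← A.natural rr r, Category.assoc, hk, Category.comp_id]
      rw [this, ih, zero_comp, comp_zero]
  | iso e hX ih =>
      have : A.φ _ r = e.inv ≫ A.φ _ r ≫ e.hom := by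
        rw [A.natural e.hom r, ← Category.assoc, e.inv_hom_id, Category.id_comp]
      rw [this, ih, zero_comp, comp_zero]

lemma phi_star (A : CentralAction (C := C) R) {I J : Set C} {r s : R}
    (hI : ∀ X ∈ I, A.φ X r = 0) (hJ : ∀ X ∈ J, A.φ X s = 0) :
    ∀ K ∈ star I J, A.φ K (r * s) = 0 := by
  rintro K ⟨K₀, K₁, f, g, h, hT, h₀, h₁⟩
  have hg : A.φ K s ≫ g = 0 := by
    rw [A.natural g s, hJ _ h₁, comp_zero]
  obtain ⟨u, hu'⟩ := Triangle.coyoneda_exact₂ _ hT (A.φ K s) hg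
  have hu : A.φ K s = (show K ⟶ K₀ from u) ≫ f := hu'
  have : A.φ K (r * s) = A.φ K s ≫ A.φ K r := by
    rw [map_mul]; rfl
  rw [this, hu, Category.assoc, ← A.natural f r, hI _ h₀, zero_comp, comp_zero]

lemma phi_angleN (A : CentralAction (C := C) R) {G : C} {s : R} (hs : A.φ G s = 0) :
    ∀ n : ℕ, ∀ X ∈ angleN {G} n, A.φ X (s ^ n) = 0 := by
  have hsing : ∀ X ∈ ({G} : Set C), A.φ X s = 0 := by
    intro X hX
    rw [Set.mem_singleton_iff] at hX
    subst hX
    exact hs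
  intro n
  induction n with
  | zero => intro X hX; exact absurd hX (Set.notMem_empty X)
  | succ k ih =>
    cases k with
    | zero =>
      intro X hX
      rw [pow_one]
      exact phi_angle A s hsing X hX
    | succ j =>
      intro X hX
      refine phi_angle A _ ?_ X hX
      intro Y hY
      rw [pow_succ]
      exact phi_star A ih (phi_angle A s hsing) Y hY


/-- Let `C` be a `ℤ/m`-graded triangulated category (`1 ≤ m ≤ ∞`; here
`m = 0` encodes `m = ∞`) and `R` a commutative Noetherian ring acting centrally on `C`.
If `G` is a split-generator of `C`, then `Supp_R Hom^•(X, Y) ⊆ Supp_R Hom^•(G, G)` for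
all objects `X, Y`; in particular any two split-generators `G, G'` satisfy
`Supp_R Hom^•(G, G) = Supp_R Hom^•(G', G')`. -/
theorem support_hom_subset_support_generator
    [IsNoetherianRing R] (A : CentralAction (C := C) R) (m : ℕ)
    (hgr : Nonempty (shiftFunctor C (m : ℤ) ≅ 𝟭 C))
    (G : C) (hG : IsSplitGenerator G) :
    (∀ X Y : C, Module.support R (A.HomBullet m X Y) ⊆ Module.support R (A.HomBullet m G G)) ∧
    (∀ G' : C, IsSplitGenerator G' →
      Module.support R (A.HomBullet m G G) = Module.support R (A.HomBullet m G' G')) := by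
  have key : ∀ G : C, IsSplitGenerator G → ∀ X Y : C,
      Module.support R (A.HomBullet m X Y) ⊆ Module.support R (A.HomBullet m G G) := by
    intro G hG X Y p hp
    by_contra hpG
    rw [Module.notMem_support_iff'] at hpG
    letI : ∀ i : ZMod m, Module R (G ⟶ G⟦(ZMod.cast i : ℤ)⟧) := fun _ => A.homModule _ _
    letI : ∀ i : ZMod m, Module R (X ⟶ Y⟦(ZMod.cast i : ℤ)⟧) := fun _ => A.homModule _ _
    have h0 : (ZMod.cast (0 : ZMod m) : ℤ) = 0 := by simp
    let eI : (shiftFunctor C ((ZMod.cast (0 : ZMod m) : ℤ))).obj G ≅ G :=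
      (shiftFunctorZero' C _ h0).app G
    obtain ⟨r, hrp, hr⟩ :=
      hpG (DirectSum.lof R (ZMod m) (fun i => G ⟶ G⟦(ZMod.cast i : ℤ)⟧) 0 eI.inv)
    have hr' : r • DirectSum.lof R (ZMod m) (fun i => G ⟶ G⟦(ZMod.cast i : ℤ)⟧) 0 eI.inv
        = (0 : ⨁ i : ZMod m, (G ⟶ G⟦(ZMod.cast i : ℤ)⟧)) := hr
    have h2 : r • eI.inv = 0 := by
      have h := congrArg (fun z : ⨁ i : ZMod m, (G ⟶ G⟦(ZMod.cast i : ℤ)⟧) => z 0) hr'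
      simpa [DirectSum.smul_apply, DirectSum.lof_apply] using h
    have h3 : eI.inv ≫ A.φ _ r = 0 := h2
    have hphi : A.φ G r = 0 := by
      have h4 : A.φ G r ≫ eI.inv = 0 := by rw [A.natural eI.inv r, h3]
      calc A.φ G r = (A.φ G r ≫ eI.inv) ≫ eI.hom := by
            rw [Category.assoc, eI.inv_hom_id, Category.comp_id]
        _ = 0 := by rw [h4, zero_comp]
    obtain ⟨n, hn⟩ := hG
    have hXmem : X ∈ angleN {G} n := hn ▸ Set.mem_univ X
    have hphiX : A.φ X (r ^ n) = 0 := phi_angleN A hphi n X hXmem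
    refine absurd hp (Module.notMem_support_iff'.mpr ?_)
    intro x
    refine ⟨r ^ n, fun hmem => hrp (p.isPrime.mem_of_pow_mem n hmem), ?_⟩
    suffices hall : ∀ y : ⨁ i : ZMod m, (X ⟶ Y⟦(ZMod.cast i : ℤ)⟧), r ^ n • y = 0 by
      exact hall x
    intro y
    apply DFinsupp.ext
    intro i
    rw [DirectSum.smul_apply]
    show y i ≫ A.φ _ (r ^ n) = 0
    rw [← A.natural _ (r ^ n), hphiX, zero_comp]
  refine ⟨key G hG, fun G' hG' => ?_⟩
  exact Set.Subset.antisymm (key G' hG' G G) (key G hG G' G')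

end RouquierDim
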